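/- Let Ψ : 𝒜 → 𝕊 be a polynomial monogenic spinor (D_iΨ = 0 for all i) such that R_{αs}Ψ = 0 for all α = 1,…,n and all s ≤ r, for some fixed r ∈ {1,…,k−1}, and additionally ∂_{y_{st}}Ψ = 0 for all s ≤ r < t. Then Ψ depends only on the variables x_{αj} with j > r and y_{cd} with r < c < d; in particular ∂_{x_{αs}}Ψ = 0 for all α = 1,…,n+1 and s ≤ r. -/

import Mathlib

open MvPolynomial

/-- Variables: the `x_{αi}` and the `y_{rs}` with `r < s`. -/
abbrev Var (n k : ℕ) := (Fin (n + 1) × Fin k) ⊕ {p : Fin k × Fin k // p.1 < p.2}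

/-- The weight of a variable: `1` for the `x`-variables, `2` for the `y`-variables. -/
def wvar (n k : ℕ) : Var n k → ℕ
  | Sum.inl _ => 1
  | Sum.inr _ => 2

/-- The signed derivative `∂_{y_{ij}}` (convention `y_{sr} = −y_{rs}`, `∂_{y_{ii}} = 0`). -/
noncomputable def pdYp {n k : ℕ} (i j : Fin k) (p : MvPolynomial (Var n k) ℂ) :
    MvPolynomial (Var n k) ℂ :=
  if h : i < j then pderiv (Sum.inr ⟨(i, j), h⟩) p
  else if h' : j < i then -pderiv (Sum.inr ⟨(j, i), h'⟩) p
  else 0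

/-- `L_{αi} = ∂_{x_{αi}} − ½ Σ_t x_{αt} ∂_{y_{it}}`. -/
noncomputable def Lop {n k : ℕ} (α : Fin (n + 1)) (i : Fin k)
    (p : MvPolynomial (Var n k) ℂ) : MvPolynomial (Var n k) ℂ :=
  pderiv (Sum.inl (α, i)) p -
    C (1 / 2 : ℂ) * ∑ t : Fin k, X (Sum.inl (α, t)) * pdYp i t p

/-- The `i`-th component `D_i = Σ_α ε_α · L_{αi}` of the `k`-Dirac operator, acting on
`𝕊`-valued polynomials on `𝒜` (the spinor space `𝕊 = ℂ^m` with Clifford multiplication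
by the matrices `ε α`). -/
noncomputable def Dop {n k m : ℕ} (ε : Fin (n + 1) → Matrix (Fin m) (Fin m) ℂ) (i : Fin k)
    (Ψ : Fin m → MvPolynomial (Var n k) ℂ) : Fin m → MvPolynomial (Var n k) ℂ :=
  fun u => ∑ α : Fin (n + 1), ∑ v : Fin m, C (ε α u v) * Lop α i (Ψ v)


/-- `R_{αi} = ∂_{x_{αi}} + ½ Σ_t x_{αt} ∂_{y_{it}}`. -/
noncomputable def Rop {n k : ℕ} (α : Fin (n + 1)) (i : Fin k)
    (p : MvPolynomial (Var n k) ℂ) : MvPolynomial (Var n k) ℂ :=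
  pderiv (Sum.inl (α, i)) p +
    C (1 / 2 : ℂ) * ∑ t : Fin k, X (Sum.inl (α, t)) * pdYp i t p


theorem pderiv_comm' {σ R : Type*} [CommSemiring R] (i j : σ) (p : MvPolynomial σ R) :
    pderiv i (pderiv j p) = pderiv j (pderiv i p) := by
  classical
  induction p using MvPolynomial.induction_on with
  | C a => simp
  | add p q hp hq => simp [hp, hq]
  | mul_X p s hp =>
      rw [pderiv_mul, pderiv_mul, map_add, map_add, pderiv_mul, pderiv_mul, hp]
      by_cases his : i = s <;> by_cases hjs : j = s <;>
        simp [his, hjs, pderiv_X, Pi.single_apply] <;> ring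

section Helpers
variable {n k : ℕ}

theorem pdYp_zero (i j : Fin k) : pdYp (n := n) i j 0 = 0 := by
  unfold pdYp; split_ifs <;> simp

theorem pdYp_add (i j : Fin k) (p q : MvPolynomial (Var n k) ℂ) :
    pdYp i j (p + q) = pdYp i j p + pdYp i j q := by
  unfold pdYp; split_ifs <;> simp <;> ring

theorem pdYp_C_mul (i j : Fin k) (a : ℂ) (p : MvPolynomial (Var n k) ℂ) :
    pdYp i j (C a * p) = C a * pdYp i j p := by
  unfold pdYp; split_ifs <;> simp [pderiv_C_mul]

theorem pdYp_X_inl_mul (i j : Fin k) (w : Fin (n+1) × Fin k) (p : MvPolynomial (Var n k) ℂ) :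
    pdYp i j (X (Sum.inl w) * p) = X (Sum.inl w) * pdYp i j p := by
  unfold pdYp; split_ifs <;> simp [pderiv_mul]

theorem pdYp_sum (i j : Fin k) {ι : Type*} (s : Finset ι) (f : ι → MvPolynomial (Var n k) ℂ) :
    pdYp i j (∑ x ∈ s, f x) = ∑ x ∈ s, pdYp i j (f x) := by
  unfold pdYp; split_ifs <;> simp [map_sum, Finset.sum_neg_distrib]

theorem pdYp_pderiv (i j : Fin k) (v : Var n k) (p : MvPolynomial (Var n k) ℂ) :
    pdYp i j (pderiv v p) = pderiv v (pdYp i j p) := by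
  unfold pdYp; split_ifs
  · exact pderiv_comm' _ _ _
  · rw [map_neg, pderiv_comm']
  · rw [map_zero]

theorem pdYp_neg (i j : Fin k) (p : MvPolynomial (Var n k) ℂ) :
    pdYp i j (-p) = - pdYp i j p := by
  unfold pdYp; split_ifs <;> simp

theorem pdYp_self (i : Fin k) (p : MvPolynomial (Var n k) ℂ) :
    pdYp (n := n) i i p = 0 := by
  unfold pdYp; simp

theorem pdYp_comm (i j s t : Fin k) (p : MvPolynomial (Var n k) ℂ) :
    pdYp i j (pdYp s t p) = pdYp s t (pdYp i j p) := by
  rcases lt_trichotomy s t with h | h | h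
  · rw [show ∀ q : MvPolynomial (Var n k) ℂ, pdYp s t q = pderiv (Sum.inr ⟨(s,t),h⟩) q
        from fun q => dif_pos h,
      show ∀ q : MvPolynomial (Var n k) ℂ, pdYp s t q = pderiv (Sum.inr ⟨(s,t),h⟩) q
        from fun q => dif_pos h, pdYp_pderiv]
  · subst h; rw [pdYp_self, pdYp_self, pdYp_zero]
  · have e : ∀ q : MvPolynomial (Var n k) ℂ, pdYp s t q = -pderiv (Sum.inr ⟨(t,s),h⟩) q := by
      intro q; unfold pdYp; rw [dif_neg (not_lt.mpr h.le), dif_pos h]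
    rw [e, e, pdYp_neg, pdYp_pderiv]

theorem pdYp_antisymm (i j : Fin k) (p : MvPolynomial (Var n k) ℂ) :
    pdYp i j p = - pdYp j i p := by
  unfold pdYp
  rcases lt_trichotomy i j with h | h | h
  · simp [h, not_lt.mpr h.le]
  · simp [h, lt_irrefl]
  · simp [h, not_lt.mpr h.le]

noncomputable def Sop (α : Fin (n + 1)) (i : Fin k) (p : MvPolynomial (Var n k) ℂ) :
    MvPolynomial (Var n k) ℂ :=
  ∑ t : Fin k, X (Sum.inl (α, t)) * pdYp i t p

theorem Rop_eq (α : Fin (n + 1)) (i : Fin k) (p : MvPolynomial (Var n k) ℂ) :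
    Rop α i p = pderiv (Sum.inl (α, i)) p + C (1 / 2 : ℂ) * Sop α i p := rfl

theorem Sop_add (α : Fin (n + 1)) (i : Fin k) (p q : MvPolynomial (Var n k) ℂ) :
    Sop α i (p + q) = Sop α i p + Sop α i q := by
  unfold Sop
  rw [← Finset.sum_add_distrib]
  exact Finset.sum_congr rfl fun t _ => by rw [pdYp_add]; ring

theorem Sop_C_mul (α : Fin (n + 1)) (i : Fin k) (a : ℂ) (p : MvPolynomial (Var n k) ℂ) :
    Sop α i (C a * p) = C a * Sop α i p := by
  unfold Sop
  rw [Finset.mul_sum]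
  exact Finset.sum_congr rfl fun t _ => by rw [pdYp_C_mul]; ring

theorem pderiv_Sop (α : Fin (n + 1)) (s i : Fin k) (p : MvPolynomial (Var n k) ℂ) :
    pderiv (Sum.inl (α, s)) (Sop α i p) =
      pdYp i s p + Sop α i (pderiv (Sum.inl (α, s)) p) := by
  classical
  unfold Sop
  rw [map_sum]
  have : ∀ t : Fin k,
      pderiv (Sum.inl (α, s)) (X (Sum.inl (α, t)) * pdYp i t p) =
      (if t = s then pdYp i t p else 0) +
        X (Sum.inl (α, t)) * pdYp i t (pderiv (Sum.inl (α, s)) p) := by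
    intro t
    rw [pderiv_mul, pdYp_pderiv]
    congr 1
    by_cases h : t = s <;> simp [h, Pi.single_apply]
  simp only [this, Finset.sum_add_distrib, Finset.sum_ite_eq' Finset.univ s]
  simp

theorem Sop_Sop_comm (α : Fin (n + 1)) (i j : Fin k) (p : MvPolynomial (Var n k) ℂ) :
    Sop α i (Sop α j p) = Sop α j (Sop α i p) := by
  unfold Sop
  have e : ∀ i j : Fin k, (∑ t : Fin k, X (Sum.inl (α, t)) *
      pdYp i t (∑ u : Fin k, X (Sum.inl (α, u)) * pdYp j u p)) =
      ∑ t : Fin k, ∑ u : Fin k,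
        X (Sum.inl (α, t)) * (X (Sum.inl (α, u)) * pdYp i t (pdYp j u p)) := by
    intro i j
    refine Finset.sum_congr rfl fun t _ => ?_
    rw [pdYp_sum, Finset.mul_sum]
    exact Finset.sum_congr rfl fun u _ => by rw [pdYp_X_inl_mul]
  rw [e, e, Finset.sum_comm]
  exact Finset.sum_congr rfl fun u _ => Finset.sum_congr rfl fun t _ => by
    rw [pdYp_comm]; ring

theorem Rop_comm (α : Fin (n + 1)) (s t : Fin k) (p : MvPolynomial (Var n k) ℂ) :
    Rop α s (Rop α t p) - Rop α t (Rop α s p) = pdYp t s p := by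
  have expand : ∀ s t : Fin k, Rop α s (Rop α t p) =
      pderiv (Sum.inl (α, s)) (pderiv (Sum.inl (α, t)) p)
      + C (1 / 2 : ℂ) * pdYp t s p
      + C (1 / 2 : ℂ) * Sop α t (pderiv (Sum.inl (α, s)) p)
      + C (1 / 2 : ℂ) * Sop α s (pderiv (Sum.inl (α, t)) p)
      + C (1 / 2 : ℂ) * (C (1 / 2 : ℂ) * Sop α s (Sop α t p)) := by
    intro s t
    rw [Rop_eq, Rop_eq, map_add, pderiv_C_mul, pderiv_Sop, Sop_add, Sop_C_mul]
    ring
  rw [expand s t, expand t s, pderiv_comm', Sop_Sop_comm,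
    pdYp_antisymm s t p]
  have hC : C (1 / 2 : ℂ) * pdYp t s p + C (1 / 2 : ℂ) * pdYp t s p = pdYp t s p := by
    rw [← add_mul, ← map_add]; norm_num
  ring_nf
  ring_nf at hC
  linear_combination hC

theorem Rop_zero (α : Fin (n + 1)) (i : Fin k) : Rop (n := n) α i 0 = 0 := by
  unfold Rop
  simp [pdYp_zero]

end Helpers

/-- Let `Ψ` be a polynomial monogenic spinor with `R_{αs}Ψ = 0` for all `α = 1,…,n` and
all columns `s ≤ r` (zero-based: `s.val < r`), and with `∂_{y_{st}}Ψ = 0` for all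
`s ≤ r < t`.  Then `Ψ` depends only on the variables `x_{αj}` with `j > r` and `y_{cd}`
with `r < c < d`; in particular `∂_{x_{αs}}Ψ = 0` for every `α = 1,…,n+1` and `s ≤ r`. -/
theorem monogenic_dependence_lemma {n k m : ℕ} (hk : 2 ≤ k) (hn : 2 ≤ n)
    (ε : Fin (n + 1) → Matrix (Fin m) (Fin m) ℂ)
    (hcl : ∀ α β, ε α * ε β + ε β * ε α =
      if α = β then (-2 : ℂ) • (1 : Matrix (Fin m) (Fin m) ℂ) else 0)
    (r : ℕ) (hr1 : 1 ≤ r) (hrk : r ≤ k - 1)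
    (Ψ : Fin m → MvPolynomial (Var n k) ℂ)
    (hD : ∀ i : Fin k, Dop ε i Ψ = 0)
    (hR : ∀ (α : Fin (n + 1)), (α : ℕ) < n → ∀ (s : Fin k), (s : ℕ) < r →
      ∀ u : Fin m, Rop α s (Ψ u) = 0)
    (hY : ∀ (s t : Fin k), (s : ℕ) < r → r ≤ (t : ℕ) →
      ∀ u : Fin m, pdYp s t (Ψ u) = 0) :
    (∀ (α : Fin (n + 1)) (s : Fin k), (s : ℕ) < r → ∀ u : Fin m,
      pderiv (Sum.inl (α, s)) (Ψ u) = 0) ∧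
    (∀ (c d : Fin k) (hcd : c < d), (c : ℕ) < r → ∀ u : Fin m,
      pderiv (Sum.inr ⟨(c, d), hcd⟩) (Ψ u) = 0) := by
  classical
  have hn0 : (0 : ℕ) < n := by omega
  set α0 : Fin (n + 1) := ⟨0, by omega⟩ with hα0def
  have hα0n : (α0 : ℕ) < n := hn0
  have hYlt : ∀ (s t : Fin k), (s : ℕ) < r → (t : ℕ) < r → ∀ u, pdYp s t (Ψ u) = 0 := by
    intro s t hs ht u
    have h1 := hR α0 hα0n t ht u
    have h2 := hR α0 hα0n s hs u
    have hcomm := Rop_comm α0 t s (Ψ u)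
    rw [h1, h2, Rop_zero, Rop_zero, sub_self] at hcomm
    exact hcomm.symm
  have hYall : ∀ (s t : Fin k), (s : ℕ) < r → ∀ u, pdYp s t (Ψ u) = 0 := by
    intro s t hs u
    by_cases ht : (t : ℕ) < r
    · exact hYlt s t hs ht u
    · exact hY s t hs (not_lt.mp ht) u
  have hsumY : ∀ (α : Fin (n + 1)) (s : Fin k), (s : ℕ) < r → ∀ u,
      (∑ t : Fin k, X (Sum.inl (α, t)) * pdYp s t (Ψ u)) = 0 := by
    intro α s hs u
    exact Finset.sum_eq_zero fun t _ => by rw [hYall s t hs u, mul_zero]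
  have hX : ∀ (α : Fin (n + 1)), (α : ℕ) < n → ∀ (s : Fin k), (s : ℕ) < r → ∀ u,
      pderiv (Sum.inl (α, s)) (Ψ u) = 0 := by
    intro α hα s hs u
    have h := hR α hα s hs u
    unfold Rop at h
    rw [hsumY α s hs u, mul_zero, add_zero] at h
    exact h
  have hL : ∀ (α : Fin (n + 1)) (s : Fin k), (s : ℕ) < r → ∀ u,
      Lop α s (Ψ u) = pderiv (Sum.inl (α, s)) (Ψ u) := by
    intro α s hs u
    unfold Lop
    rw [hsumY α s hs u, mul_zero, sub_zero]
  set β : Fin (n + 1) := ⟨n, by omega⟩ with hβdef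
  have hXβ : ∀ (s : Fin k), (s : ℕ) < r → ∀ u, pderiv (Sum.inl (β, s)) (Ψ u) = 0 := by
    intro s hs w
    set q : Fin m → MvPolynomial (Var n k) ℂ := fun v => pderiv (Sum.inl (β, s)) (Ψ v)
      with hqdef
    have hD0 : ∀ u, ∑ α : Fin (n + 1), ∑ v : Fin m, C (ε α u v) * Lop α s (Ψ v) = 0 := by
      intro u
      have h := congrFun (hD s) u
      simpa [Dop] using h
    have key : ∀ u, ∑ v : Fin m, C (ε β u v) * q v = 0 := by
      intro u
      have h := hD0 u
      rw [Finset.sum_eq_single β] at h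
      · rw [← h]
        exact (Finset.sum_congr rfl fun v _ => by rw [hL β s hs v]).symm
      · intro b _ hb
        have hbn : (b : ℕ) < n := by
          have := b.isLt
          have : (b : ℕ) ≠ n := fun hc => hb (Fin.ext (by simp [hβdef, hc]))
          omega
        exact Finset.sum_eq_zero fun v _ => by
          rw [hL b s hs v, hX b hbn s hs v, mul_zero]
      · intro hβu
        exact absurd (Finset.mem_univ β) hβu
    have hM : ε β * ε β = (-1 : ℂ) • 1 := by
      have h := hcl β β
      rw [if_pos rfl] at h
      have h2 : (2 : ℂ) • (ε β * ε β) = (-2 : ℂ) • 1 := by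
        rw [two_smul]; exact h
      calc ε β * ε β = (2 : ℂ)⁻¹ • ((2 : ℂ) • (ε β * ε β)) := by
            rw [smul_smul]; norm_num
        _ = (2 : ℂ)⁻¹ • ((-2 : ℂ) • 1) := by rw [h2]
        _ = (-1 : ℂ) • 1 := by rw [smul_smul]; norm_num
    have final : ∑ u : Fin m, C (ε β w u) * (∑ v : Fin m, C (ε β u v) * q v) = 0 := by
      refine Finset.sum_eq_zero fun u _ => ?_
      rw [key u, mul_zero]
    have e2 : ∑ u : Fin m, C (ε β w u) * (∑ v : Fin m, C (ε β u v) * q v)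
        = ∑ v : Fin m, C ((ε β * ε β) w v) * q v := by
      simp_rw [Finset.mul_sum, ← mul_assoc, ← map_mul]
      rw [Finset.sum_comm]
      refine Finset.sum_congr rfl fun v _ => ?_
      rw [← Finset.sum_mul, ← map_sum, Matrix.mul_apply]
    have e3 : ∑ v : Fin m, C ((ε β * ε β) w v) * q v = - q w := by
      rw [hM]
      have hrw : (∑ v : Fin m, C (((-1 : ℂ) • (1 : Matrix (Fin m) (Fin m) ℂ)) w v) * q v)
          = ∑ v : Fin m, (if w = v then -q v else 0) := by
        refine Finset.sum_congr rfl fun v _ => ?_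
        by_cases h : w = v
        · subst h; simp [Matrix.smul_apply, Matrix.one_apply_eq]
        · simp [Matrix.smul_apply, Matrix.one_apply_ne h, if_neg h]
      rw [hrw, Finset.sum_ite_eq Finset.univ w]
      simp
    rw [e2, e3] at final
    exact neg_eq_zero.mp final
  constructor
  · intro α s hs u
    by_cases hα : (α : ℕ) < n
    · exact hX α hα s hs u
    · have hαβ : α = β := by
        apply Fin.ext
        have := α.isLt
        simp only [hβdef]
        omega
      rw [hαβ]
      exact hXβ s hs u
  · intro c d hcd hc u
    have h := hYall c d hc u
    rwa [show pdYp c d (Ψ u) = pderiv (Sum.inr ⟨(c, d), hcd⟩) (Ψ u) from dif_pos hcd] at h
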